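/- Let D be a digraph, Y ⊆ V(D), X₀ ⊆ V(D) \ Y. Suppose v ∈ V(D) \ (X₀ ∪ Y) is strongly connected to no vertex of Y in D − X₀, and that every closed directed walk in D − X₀ containing both vertices of some pair (s,t) ∈ C must pass through a vertex of Y. Then X′ ⊆ V(D) \ (X₀ ∪ {v}) is a symmetric multicut for ((D − X₀) − v, C') if and only if X′ is a symmetric multicut for (D − X₀, C), where C' removes pairs involving v. -/

import Mathlib

/-- Reachability by directed walks in a digraph given by its arc relation. -/
def Reach {V : Type*} (E : V → V → Prop) : V → V → Prop := Relation.ReflTransGen E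

/-- The digraph obtained by deleting the vertex set `X` (induced subgraph on the complement). -/
def Del {V : Type*} (E : V → V → Prop) (X : Set V) : V → V → Prop :=
  fun u v => E u v ∧ u ∉ X ∧ v ∉ X

/-- Two vertices are strongly connected (in the same strongly connected component). -/
def SCC {V : Type*} (E : V → V → Prop) (u v : V) : Prop := Reach E u v ∧ Reach E v u

/-- `X'` is a symmetric multicut for `(H, C)`: no pair `(s,t) ∈ C` with `s, t ∉ X'`
is strongly connected in `H − X'`. -/
def SymMulticut {V : Type*} (E : V → V → Prop) (C : Set (V × V)) (X' : Set V) : Prop :=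
  ∀ p ∈ C, p.1 ∉ X' → p.2 ∉ X' → ¬ SCC (Del E X') p.1 p.2

lemma reach_mono {V : Type*} {E F : V → V → Prop} (h : ∀ a b, E a b → F a b) {a b : V}
    (hr : Reach E a b) : Reach F a b := Relation.ReflTransGen.mono h a b hr

lemma reach_trans {V : Type*} {E : V → V → Prop} {a b c : V}
    (h1 : Reach E a b) (h2 : Reach E b c) : Reach E a c :=
  Relation.ReflTransGen.trans h1 h2

lemma reach_refl {V : Type*} {E : V → V → Prop} {a : V} : Reach E a a :=
  Relation.ReflTransGen.refl

lemma reach_del_stop {V : Type*} {E : V → V → Prop} {S : Set V} {a b : V}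
    (h : Reach (Del E S) a b) (hb : b ∈ S) : a = b := by
  rcases Relation.ReflTransGen.cases_tail h with h' | ⟨c, _, hcb⟩
  · exact h'.symm
  · exact absurd hb hcb.2.2

lemma reach_split {V : Type*} {E : V → V → Prop} (S : Set V) {a b : V} (h : Reach E a b) :
    Reach (Del E S) a b ∨ ∃ y ∈ S, Reach E a y ∧ Reach E y b := by
  induction h with
  | refl => exact Or.inl Relation.ReflTransGen.refl
  | @tail c d hac hcd ih =>
    rcases ih with hl | ⟨y, hy, hay, hyc⟩
    · by_cases hc : c ∈ S
      · obtain rfl := reach_del_stop hl hc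
        exact Or.inr ⟨a, hc, Relation.ReflTransGen.refl, Relation.ReflTransGen.single hcd⟩
      · by_cases hd : d ∈ S
        · exact Or.inr ⟨d, hd, Relation.ReflTransGen.tail hac hcd, Relation.ReflTransGen.refl⟩
        · exact Or.inl (Relation.ReflTransGen.tail hl ⟨hcd, hc, hd⟩)
    · exact Or.inr ⟨y, hy, hay, Relation.ReflTransGen.tail hyc hcd⟩

/-- If `v` is strongly connected to no vertex of `Y` in `D − X₀` and every closed walk of
`D − X₀` through both endpoints of a cut request meets `Y` (i.e. no request pair outside `Y`
is strongly connected in `D − X₀ − Y`), then symmetric multicuts of `(D − X₀ − v, C')` and of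
`(D − X₀, C)` coincide, where `C'` removes pairs involving `v`. -/
theorem remove_isolated_vertex {V : Type*} (E : V → V → Prop) (X₀ Y : Set V)
    (C : Set (V × V)) (v : V) (hv : v ∉ X₀ ∪ Y)
    (hviso : ∀ y ∈ Y, ¬ SCC (Del E X₀) v y)
    (hwalk : ∀ p ∈ C, p.1 ∉ Y → p.2 ∉ Y → ¬ SCC (Del E (X₀ ∪ Y)) p.1 p.2)
    (X' : Set V) (hX' : X' ⊆ (X₀ ∪ {v})ᶜ) :
    SymMulticut (Del E (X₀ ∪ {v})) {p ∈ C | p.1 ≠ v ∧ p.2 ≠ v} X' ↔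
      SymMulticut (Del E X₀) C X' := by
  have monoD : ∀ a b, Del (Del E X₀) X' a b → Del E X₀ a b := fun a b h => h.1
  have monoV : ∀ a b, Del (Del (Del E X₀) X') {v} a b →
      Del (Del E (X₀ ∪ {v})) X' a b := by
    intro a b h
    simp only [Del, Set.mem_union, Set.mem_singleton_iff] at *
    tauto
  have monoY : ∀ a b, Del (Del (Del E X₀) X') Y a b → Del E (X₀ ∪ Y) a b := by
    intro a b h
    simp only [Del, Set.mem_union] at *
    tauto
  constructor
  · -- hard direction
    intro hM p hp hp1 hp2 hSCC
    obtain ⟨h12, h21⟩ := hSCC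
    have m12 : Reach (Del E X₀) p.1 p.2 := reach_mono monoD h12
    have m21 : Reach (Del E X₀) p.2 p.1 := reach_mono monoD h21
    -- v is not strongly connected to p.1 in D − X₀
    have hnov : ¬ SCC (Del E X₀) v p.1 := by
      rintro ⟨hv1, h1v⟩
      by_cases hY1 : p.1 ∈ Y
      · exact hviso p.1 hY1 ⟨hv1, h1v⟩
      by_cases hY2 : p.2 ∈ Y
      · exact hviso p.2 hY2 ⟨reach_trans hv1 m12, reach_trans m21 h1v⟩
      apply hwalk p hp hY1 hY2
      rcases reach_split Y h12 with h12Y | ⟨y, hyY, h1y, hy2⟩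
      · rcases reach_split Y h21 with h21Y | ⟨y, hyY, h2y, hy1⟩
        · exact ⟨reach_mono monoY h12Y, reach_mono monoY h21Y⟩
        · exact absurd ⟨reach_trans (reach_trans hv1 m12) (reach_mono monoD h2y),
            reach_trans (reach_mono monoD hy1) h1v⟩ (hviso y hyY)
      · exact absurd ⟨reach_trans hv1 (reach_mono monoD h1y),
          reach_trans (reach_trans (reach_mono monoD hy2) m21) h1v⟩ (hviso y hyY)
    have hne1 : p.1 ≠ v := by
      rintro rfl
      exact hnov ⟨reach_refl, reach_refl⟩
    have hne2 : p.2 ≠ v := by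
      rintro rfl
      exact hnov ⟨m21, m12⟩
    rcases reach_split {v} h12 with h12v | ⟨y, hy, h1y, hy2⟩
    · rcases reach_split {v} h21 with h21v | ⟨y, hy, h2y, hy1⟩
      · exact hM p ⟨hp, hne1, hne2⟩ hp1 hp2
          ⟨reach_mono monoV h12v, reach_mono monoV h21v⟩
      · obtain rfl : y = v := hy
        exact hnov ⟨reach_mono monoD hy1,
          reach_trans m12 (reach_mono monoD h2y)⟩
    · obtain rfl : y = v := hy
      exact hnov ⟨reach_trans (reach_mono monoD hy2) m21, reach_mono monoD h1y⟩
  · -- easy direction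
    intro hM p hp hp1 hp2 hSCC
    apply hM p hp.1 hp1 hp2
    have mono : ∀ a b, Del (Del E (X₀ ∪ {v})) X' a b → Del (Del E X₀) X' a b := by
      intro a b h
      simp only [Del, Set.mem_union] at *
      tauto
    exact ⟨reach_mono mono hSCC.1, reach_mono mono hSCC.2⟩
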